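/- Let $R$ be a Dedekind domain of characteristic $0$ with fraction field $F$ and let $\mathfrak{A}$ be a Gorenstein $R$-order in a finite-dimensional separable commutative $F$-algebra $A$. Then every finitely generated $\mathfrak{A}$-module $X$ that is $R$-torsion-free is reflexive: the natural evaluation map $X \to \operatorname{Hom}_{\mathfrak{A}}(\operatorname{Hom}_{\mathfrak{A}}(X,\mathfrak{A}),\mathfrak{A})$ is bijective. -/

import Mathlib

open CategoryTheory Opposite Limits

universe u


set_option linter.unusedSectionVars false

noncomputable section ExtLift

variable {𝔄 : Type u} [CommRing 𝔄]

namespace ExtHelper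

open CategoryTheory.ProjectiveResolution

variable {N P : ModuleCat.{u} 𝔄} (π : P ⟶ N) [Projective P] [Epi π]

def ofComplex' : ChainComplex (ModuleCat.{u} 𝔄) ℕ :=
  ChainComplex.mk' P (Projective.syzygies π) (Projective.d π)
    (fun f => ⟨_, Projective.d f, (Category.assoc _ _ _).trans ((congrArg (fun k => Projective.π (kernel f) ≫ k) (kernel.condition f)).trans comp_zero)⟩)

lemma ofComplex'_d_1_0 :
    (ofComplex' π).d 1 0 = Projective.d π := by
  simp [ofComplex']

lemma ofComplex'_d_succ (n : ℕ) :
    ∃ e : Projective.syzygies ((ofComplex' π).d (n + 1 + 1) (n + 1)) ≅ (ofComplex' π).X (n + 1 + 2),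
      e.hom ≫ (ofComplex' π).d (n + 1 + 2) (n + 1 + 1) =
        Projective.d ((ofComplex' π).d (n + 1 + 1) (n + 1)) := by
  unfold ofComplex'
  refine ⟨(ChainComplex.mk'XIso P (Projective.syzygies π) (Projective.d π)
      (fun f => ⟨_, Projective.d f, (Category.assoc _ _ _).trans ((congrArg
        (fun k => Projective.π (kernel f) ≫ k) (kernel.condition f)).trans comp_zero)⟩) (n + 1)).symm, ?_⟩
  rw [Iso.symm_hom, ChainComplex.mk'_d _ _ _ _ (n + 1), Iso.inv_hom_id_assoc]

lemma ofComplex'_exactAt_succ (n : ℕ) :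
    (ofComplex' π).ExactAt (n + 1) := by
  rw [HomologicalComplex.exactAt_iff' _ (n + 1 + 1) (n + 1) n (by simp) (by simp)]
  match n with
  | 0 =>
    dsimp [ofComplex', HomologicalComplex.sc', HomologicalComplex.shortComplexFunctor',
      ChainComplex.mk', ChainComplex.mk]
    apply exact_d_f
  | n + 1 =>
    obtain ⟨e, he⟩ := ofComplex'_d_succ π n
    refine ShortComplex.exact_of_iso ?_ (exact_d_f ((ofComplex' π).d (n + 1 + 1) (n + 1)))
    refine ShortComplex.isoMk e (Iso.refl _) (Iso.refl _) ?_ ?_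
    · exact he.trans (Category.comp_id _).symm
    · exact (Category.id_comp _).trans (Category.comp_id _).symm

instance (n : ℕ) : Projective ((ofComplex' π).X n) := by
  obtain (_ | _ | _ | n) := n
  · exact inferInstanceAs (Projective P)
  · apply Projective.projective_over
  · apply Projective.projective_over
  · apply Projective.projective_over

def res : ProjectiveResolution N where
  complex := ofComplex' π
  π := (ChainComplex.toSingle₀Equiv _ _).symm ⟨π, by
          rw [ofComplex'_d_1_0]
          exact (Category.assoc _ _ _).trans ((congrArg (fun k => Projective.π (kernel π) ≫ k) (kernel.condition π)).trans comp_zero)⟩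
  quasiIso := ⟨fun n => by
    cases n
    · rw [ChainComplex.quasiIsoAt₀_iff, ShortComplex.quasiIso_iff_of_zeros']
      · refine (ShortComplex.exact_and_epi_g_iff_of_iso ?_).2
          ⟨exact_d_f π, inferInstance⟩
        exact ShortComplex.isoMk (Iso.refl _) (Iso.refl _) (Iso.refl _)
          (by simp [ofComplex']; rfl) (by simp; rfl)
      all_goals rfl
    · rw [quasiIsoAt_iff_exactAt']
      · apply ofComplex'_exactAt_succ
      · apply ChainComplex.exactAt_succ_single_obj⟩

lemma lift_of_subsingleton_ext {B : ModuleCat.{u} 𝔄}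
    (h : Subsingleton (((Ext 𝔄 (ModuleCat.{u} 𝔄) 1).obj (op N)).obj B))
    (φ : kernel π ⟶ B) : ∃ g : P ⟶ B, kernel.ι π ≫ g = φ := by
  set Pr := res π with hPr
  set C := Pr.complex.linearYonedaObj 𝔄 B with hC
  have hsub : Subsingleton (C.homology 1) := by
    have e := ((forget (ModuleCat 𝔄)).mapIso (Pr.isoExt 1 B)).toEquiv
    exact e.symm.subsingleton
  have hzero : IsZero (C.homology 1) := ModuleCat.isZero_of_subsingleton _
  have hex : C.ExactAt 1 := (HomologicalComplex.exactAt_iff_isZero_homology _ _).2 hzero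
  rw [HomologicalComplex.exactAt_iff' _ 0 1 2 (by simp) (by simp)] at hex
  rw [ShortComplex.moduleCat_exact_iff] at hex
  -- the element of C.X 1
  let f₁ : (ofComplex' π).X 1 ⟶ B :=
    (show Projective.syzygies π ⟶ B from Projective.π (kernel π) ≫ φ)
  have h21 : (ofComplex' π).d 2 1 ≫ Projective.π (kernel π) = 0 := by
    rw [← cancel_mono (kernel.ι π)]
    have := (ofComplex' π).d_comp_d 2 1 0
    rw [ofComplex'_d_1_0] at this
    exact (Category.assoc _ _ _).trans (this.trans zero_comp.symm)
  have hf₁ : (C.sc' 0 1 2).g f₁ = 0 := by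
    show (ofComplex' π).d 2 1 ≫ f₁ = 0
    show (ofComplex' π).d 2 1 ≫ (Projective.π (kernel π) ≫ φ) = 0
    have := congrArg (fun k => k ≫ φ) h21
    rw [zero_comp] at this
    exact (Category.assoc _ _ _).symm.trans this
  obtain ⟨y, hy⟩ := hex f₁ hf₁
  refine ⟨y, ?_⟩
  have hy' : (ofComplex' π).d 1 0 ≫ y = f₁ := hy
  rw [ofComplex'_d_1_0] at hy'
  have : Projective.π (kernel π) ≫ (kernel.ι π ≫ y) = Projective.π (kernel π) ≫ φ := by
    exact (Category.assoc _ _ _).symm.trans hy'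
  exact (cancel_epi (Projective.π (kernel π))).1 this

end ExtHelper

end ExtLift

section Bridge

variable {𝔄 : Type u} [CommRing 𝔄]

lemma lift_of_ext' {P N B : Type u} [AddCommGroup P] [Module 𝔄 P]
    [AddCommGroup N] [Module 𝔄 N] [AddCommGroup B] [Module 𝔄 B]
    (hproj : Module.Projective 𝔄 P)
    (p : P →ₗ[𝔄] N) (hp : Function.Surjective p)
    (h : Subsingleton (((Ext 𝔄 (ModuleCat.{u} 𝔄) 1).obj
        (op (ModuleCat.of 𝔄 N))).obj (ModuleCat.of 𝔄 B)))
    (φ : LinearMap.ker p →ₗ[𝔄] B) :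
    ∃ g : P →ₗ[𝔄] B, ∀ x (hx : x ∈ LinearMap.ker p), g x = φ ⟨x, hx⟩ := by
  haveI : Projective (ModuleCat.of 𝔄 P) := (IsProjective.iff_projective P).1 hproj
  let π : ModuleCat.of 𝔄 P ⟶ ModuleCat.of 𝔄 N := ModuleCat.ofHom p
  haveI : Epi π := (ModuleCat.epi_iff_surjective π).2 hp
  let e := ModuleCat.kernelIsoKer π
  let φ' : kernel π ⟶ ModuleCat.of 𝔄 B :=
    e.hom ≫ (show ModuleCat.of 𝔄 (LinearMap.ker π.hom) ⟶ ModuleCat.of 𝔄 B from ModuleCat.ofHom φ)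
  obtain ⟨g, hg⟩ := ExtHelper.lift_of_subsingleton_ext π h φ'
  refine ⟨g.hom, fun x hx => ?_⟩
  have h2 : e.inv ≫ kernel.ι π ≫ g = e.inv ≫ φ' := by rw [hg]
  rw [← Category.assoc, ModuleCat.kernelIsoKer_inv_kernel_ι] at h2
  have h3 : e.inv ≫ φ' = (show ModuleCat.of 𝔄 (LinearMap.ker π.hom) ⟶ ModuleCat.of 𝔄 B from ModuleCat.ofHom φ) := by
    rw [show φ' = e.hom ≫ _ from rfl, ← Category.assoc, e.inv_hom_id, Category.id_comp]
  rw [h3] at h2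
  exact congrArg (fun (t : ModuleCat.of 𝔄 (LinearMap.ker π.hom) ⟶ ModuleCat.of 𝔄 B) => t ⟨x, hx⟩) h2

end Bridge


set_option maxHeartbeats 2000000 in
/-- Let `R` be a Dedekind domain of characteristic `0` with fraction field
`F` and let `𝔄` be a Gorenstein `R`-order in a finite-dimensional separable commutative
`F`-algebra `A` (Gorenstein meaning that `Ext¹_𝔄(N, 𝔄) = 0` for every finitely generated
`R`-torsion-free `𝔄`-module `N`). Then every finitely generated `𝔄`-module `X` that is
`R`-torsion-free is reflexive: the natural evaluation map
`X → Hom_𝔄(Hom_𝔄(X, 𝔄), 𝔄)` is bijective. -/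
theorem gorenstein_order_torsionFree_reflexive
    (R : Type u) [CommRing R] [IsDedekindDomain R] [CharZero R]
    (F : Type u) [Field F] [Algebra R F] [IsFractionRing R F]
    (A : Type u) [CommRing A] [Algebra F A] [FiniteDimensional F A] [Algebra.IsSeparable F A]
    [Algebra R A] [IsScalarTower R F A]
    (𝔄 : Type u) [CommRing 𝔄] [Algebra R 𝔄] [Module.Finite R 𝔄]
    [Algebra 𝔄 A] [IsScalarTower R 𝔄 A]
    (hinj : Function.Injective (algebraMap 𝔄 A))
    (hspan : Submodule.span F (Set.range (algebraMap 𝔄 A)) = ⊤)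
    (hGor : ∀ (N : Type u) [AddCommGroup N] [Module 𝔄 N] [Module R N] [IsScalarTower R 𝔄 N],
      Module.Finite 𝔄 N → (∀ (r : R) (n : N), r • n = 0 → r = 0 ∨ n = 0) →
      Subsingleton (((Ext 𝔄 (ModuleCat.{u} 𝔄) 1).obj (op (ModuleCat.of 𝔄 N))).obj
        (ModuleCat.of 𝔄 𝔄)))
    (X : Type u) [AddCommGroup X] [Module 𝔄 X] [Module R X] [IsScalarTower R 𝔄 X]
    [Module.Finite 𝔄 X]
    (hXtf : ∀ (r : R) (x : X), r • x = 0 → r = 0 ∨ x = 0) :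
    Function.Bijective (Module.Dual.eval 𝔄 X) := by
  -- `𝔄` is `R`-torsion-free
  have hAtf : ∀ (r : R) (a : 𝔄), r • a = 0 → r = 0 ∨ a = 0 := by
    intro r a h
    by_cases hr : r = 0
    · exact Or.inl hr
    right
    apply hinj
    have h1 : r • (algebraMap 𝔄 A a) = 0 := by
      have := map_smul (IsScalarTower.toAlgHom R 𝔄 A) r a
      rw [show (IsScalarTower.toAlgHom R 𝔄 A) (r • a) = algebraMap 𝔄 A (r • a) from rfl,
        show (IsScalarTower.toAlgHom R 𝔄 A) a = algebraMap 𝔄 A a from rfl] at this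
      rw [← this, h, map_zero]
    rw [← algebraMap_smul F r (algebraMap 𝔄 A a), smul_eq_zero] at h1
    rcases h1 with h1 | h1
    · exact absurd (IsFractionRing.injective R F (by rw [h1, map_zero])) hr
    · rw [map_zero]; exact h1
  constructor
  · -- injectivity
    set S : Submonoid 𝔄 := Algebra.algebraMapSubmonoid 𝔄 (nonZeroDivisors R) with hSdef
    have hunits : ∀ s : S, IsUnit (algebraMap 𝔄 A s) := by
      rintro ⟨s, r, hr, rfl⟩
      have h1 : algebraMap 𝔄 A (algebraMap R 𝔄 r) = algebraMap F A (algebraMap R F r) := by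
        rw [← IsScalarTower.algebraMap_apply R 𝔄 A, IsScalarTower.algebraMap_apply R F A]
      rw [h1]
      refine IsUnit.map _ (isUnit_iff_ne_zero.2 fun h0 => ?_)
      exact nonZeroDivisors.ne_zero hr
        (IsFractionRing.injective R F (by rw [h0, map_zero]))
    let K := Localization S
    let ψ : K →+* A := IsLocalization.lift (S := K) hunits
    have hψalg : ∀ a : 𝔄, ψ (algebraMap 𝔄 K a) = algebraMap 𝔄 A a := fun a =>
      IsLocalization.lift_eq hunits a
    have hψinj : Function.Injective ψ := by
      rw [injective_iff_map_eq_zero]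
      intro z hz
      obtain ⟨⟨a, s⟩, hzz⟩ := IsLocalization.surj (M := S) z
      have h2 : ψ (z * algebraMap 𝔄 K s) = ψ (algebraMap 𝔄 K a) := by rw [hzz]
      rw [map_mul, hz, zero_mul, hψalg] at h2
      have ha : a = 0 := hinj (by rw [← h2, map_zero])
      rw [ha, map_zero] at hzz
      have hu := IsLocalization.map_units K s
      exact (hu.mul_left_eq_zero).1 hzz
    have hψsurj : Function.Surjective ψ := by
      intro a
      have ha : a ∈ Submodule.span F (Set.range (algebraMap 𝔄 A)) := by
        rw [hspan]; trivial
      obtain ⟨m, c, v, hsum⟩ := Submodule.mem_span_set'.1 ha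
      obtain ⟨b, hb⟩ := IsLocalization.exist_integer_multiples
        (nonZeroDivisors R) Finset.univ c
      choose w hw using fun i : Fin m => (v i).2
      choose cc hcc using fun i : Fin m => hb i (Finset.mem_univ i)
      have hba : (b : R) • a = algebraMap 𝔄 A (∑ i, cc i • w i) := by
        rw [← hsum, Finset.smul_sum, map_sum]
        refine Finset.sum_congr rfl fun i _ => ?_
        calc (b : R) • (c i • (v i : A))
            = ((b : R) • c i) • (v i : A) := (smul_assoc _ _ _).symm
          _ = (algebraMap R F (cc i)) • (v i : A) := by rw [hcc i]
          _ = cc i • (v i : A) := algebraMap_smul F (cc i) _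
          _ = algebraMap 𝔄 A (cc i • w i) := by
              rw [← hw i]
              have := map_smul (IsScalarTower.toAlgHom R 𝔄 A) (cc i) (w i)
              rw [show (IsScalarTower.toAlgHom R 𝔄 A) (cc i • w i)
                    = algebraMap 𝔄 A (cc i • w i) from rfl,
                show (IsScalarTower.toAlgHom R 𝔄 A) (w i) = algebraMap 𝔄 A (w i) from rfl] at this
              rw [this]
      set u : 𝔄 := ∑ i, cc i • w i with hu
      have hsmem : algebraMap R 𝔄 (b : R) ∈ S := ⟨(b : R), b.2, rfl⟩
      set sb : S := ⟨algebraMap R 𝔄 (b : R), hsmem⟩ with hsb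
      refine ⟨IsLocalization.mk' K u sb, ?_⟩
      rw [IsLocalization.lift_mk'_spec]
      rw [show ((sb : 𝔄)) = algebraMap R 𝔄 (b : R) from rfl,
        ← IsScalarTower.algebraMap_apply R 𝔄 A, ← Algebra.smul_def, hba]
    let e : K ≃+* A := RingEquiv.ofBijective ψ ⟨hψinj, hψsurj⟩
    haveI : IsArtinianRing A := isArtinian_of_tower F inferInstance
    haveI : IsReduced A := by
      constructor
      intro a ha
      obtain ⟨m, hm⟩ := ha
      rcases Nat.eq_zero_or_pos m with hm0 | hmpos
      · subst hm0
        simp only [pow_zero] at hm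
        haveI : Subsingleton A := subsingleton_of_zero_eq_one hm.symm
        exact Subsingleton.elim a 0
      · have hsep : (minpoly F a).Separable := Algebra.IsSeparable.isSeparable F a
        have hsq : Squarefree (minpoly F a) := hsep.squarefree
        have hdvd : minpoly F a ∣ Polynomial.X ^ m := minpoly.dvd F a (by simp [hm])
        obtain ⟨q, hq⟩ := (hsq.dvd_pow_iff_dvd hmpos.ne').1 hdvd
        have haX := congrArg (Polynomial.aeval a) hq
        simpa [minpoly.aeval] using haX
    haveI : IsSemisimpleRing A := IsArtinianRing.isSemisimpleRing_of_isReduced A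
    haveI hssK : IsSemisimpleRing K := e.symm.isSemisimpleRing
    rw [injective_iff_map_eq_zero]
    intro x hx
    by_contra hx0
    set V := LocalizedModule S X with hVdef
    set ι := LocalizedModule.mkLinearMap S X with hιdef
    have hv0 : ι x ≠ 0 := by
      intro h0
      obtain ⟨s', hs'⟩ := (IsLocalizedModule.eq_zero_iff S ι).1 h0
      obtain ⟨r, hr, hrs⟩ := s'.2
      have hrx : r • x = 0 := by
        rw [← algebraMap_smul 𝔄 r x, hrs]
        exact hs'
      rcases hXtf r x hrx with h | h
      · exact nonZeroDivisors.ne_zero hr h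
      · exact hx0 h
    haveI : IsSemisimpleModule K V := inferInstance
    obtain ⟨W, hW⟩ := exists_isCompl (Submodule.span K {ι x})
    let pr := Submodule.linearProjOfIsCompl _ W hW
    let t := LinearMap.toSpanSingleton K V (ι x)
    obtain ⟨J, hJ⟩ := exists_isCompl (LinearMap.ker t)
    let e2 := Submodule.quotientEquivOfIsCompl _ J hJ
    let e3 := t.quotKerEquivRange
    let e4 : (Submodule.span K {ι x} : Submodule K V) ≃ₗ[K] LinearMap.range t :=
      LinearEquiv.ofEq _ _ (LinearMap.span_singleton_eq_range K V (ι x))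
    let g : V →ₗ[K] K := J.subtype ∘ₗ (e2 : K ⧸ LinearMap.ker t →ₗ[K] J) ∘ₗ
      (e3.symm : (LinearMap.range t : Submodule K V) →ₗ[K] K ⧸ LinearMap.ker t) ∘ₗ
      (e4 : (Submodule.span K {ι x} : Submodule K V) →ₗ[K] LinearMap.range t) ∘ₗ
      (pr : V →ₗ[K] (Submodule.span K {ι x} : Submodule K V))
    have hmemspan : ι x ∈ Submodule.span K {ι x} := Submodule.mem_span_singleton_self _
    have hmemrange : ι x ∈ LinearMap.range t := ⟨1, one_smul _ _⟩
    have hgv : g (ι x) ≠ 0 := by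
      have hpr : pr (ι x) = ⟨ι x, hmemspan⟩ :=
        Submodule.linearProjOfIsCompl_apply_left hW ⟨ι x, hmemspan⟩
      have he4 : e4 ⟨ι x, hmemspan⟩ = ⟨ι x, hmemrange⟩ := Subtype.ext rfl
      have he3 : e3 (Submodule.Quotient.mk 1) = ⟨ι x, hmemrange⟩ := by
        apply Subtype.ext
        show t 1 = ι x
        exact one_smul _ _
      have he3' : e3.symm ⟨ι x, hmemrange⟩ = Submodule.Quotient.mk 1 := by
        rw [← he3, LinearEquiv.symm_apply_apply]
      have hgval : g (ι x) = (e2 (Submodule.Quotient.mk 1) : K) := by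
        show (J.subtype (e2 (e3.symm (e4 (pr (ι x)))))) = _
        rw [hpr, he4, he3']
        rfl
      rw [hgval]
      intro h0
      have h1 : e2 (Submodule.Quotient.mk 1) = 0 := Subtype.ext h0
      have h2 : (Submodule.Quotient.mk (1 : K) : K ⧸ LinearMap.ker t) = 0 :=
        (LinearEquiv.map_eq_zero_iff e2).1 h1
      have h3 : (1 : K) ∈ LinearMap.ker t := (Submodule.Quotient.mk_eq_zero _).1 h2
      have h4 : t 1 = 0 := h3
      exact hv0 (by rw [← one_smul K (ι x)]; exact h4)
    let h : X →ₗ[𝔄] K := (LinearMap.restrictScalars 𝔄 g) ∘ₗ ι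
    obtain ⟨sfin, hsfin⟩ := Module.Finite.fg_top (R := 𝔄) (M := X)
    obtain ⟨b, hb⟩ := IsLocalization.exist_integer_multiples S sfin (fun x' : X => h x')
    let h' : X →ₗ[𝔄] K := (b : 𝔄) • h
    have hrange : ∀ x', h' x' ∈ LinearMap.range (Algebra.linearMap 𝔄 K) := by
      intro x'
      have hx' : x' ∈ Submodule.span 𝔄 (sfin : Set X) := by rw [hsfin]; trivial
      induction hx' using Submodule.span_induction with
      | mem y hy =>
        obtain ⟨z, hz⟩ := hb y hy
        exact ⟨z, by rw [show Algebra.linearMap 𝔄 K z = algebraMap 𝔄 K z from rfl, hz]; rfl⟩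
      | zero => rw [map_zero]; exact Submodule.zero_mem _
      | add y z _ _ hy hz => rw [map_add]; exact Submodule.add_mem _ hy hz
      | smul a' y _ hy => rw [map_smul]; exact Submodule.smul_mem _ _ hy
    have halginj : Function.Injective (Algebra.linearMap 𝔄 K) := by
      intro a1 a2 h12
      apply hinj
      rw [← hψalg a1, ← hψalg a2]
      exact congrArg ψ h12
    let eK := LinearEquiv.ofInjective (Algebra.linearMap 𝔄 K) halginj
    let f : X →ₗ[𝔄] 𝔄 :=
      (eK.symm : (LinearMap.range (Algebra.linearMap 𝔄 K) : Submodule 𝔄 K) →ₗ[𝔄] 𝔄) ∘ₗ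
        h'.codRestrict _ hrange
    have hfx : f x ≠ 0 := by
      intro h0
      have h1 : (⟨h' x, hrange x⟩ : (LinearMap.range (Algebra.linearMap 𝔄 K) : Submodule 𝔄 K))
          = 0 := by
        have h2 : eK (f x) = ⟨h' x, hrange x⟩ := by
          show eK (eK.symm _) = _
          rw [LinearEquiv.apply_symm_apply]
          exact Subtype.ext rfl
        rw [h0] at h2
        rw [← h2, map_zero]
      have h2 : h' x = 0 := congrArg Subtype.val h1
      have h3 : (b : 𝔄) • (g (ι x)) = 0 := h2
      rw [Algebra.smul_def] at h3
      exact hgv ((IsUnit.mul_right_eq_zero (IsLocalization.map_units K b)).1 h3)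
    exact hfx (LinearMap.congr_fun hx f)
  · -- surjectivity
    intro ξ
    obtain ⟨n, p, hp⟩ := Module.Finite.exists_fin' 𝔄 X
    set D := Module.Dual 𝔄 (Fin n → 𝔄) with hD
    set j : Module.Dual 𝔄 X →ₗ[𝔄] D := p.dualMap with hjdef
    have hj : Function.Injective j := by
      intro f g hfg
      ext x
      obtain ⟨y, rfl⟩ := hp x
      exact LinearMap.congr_fun hfg y
    set N₀ := D ⧸ LinearMap.range j with hN₀
    -- torsion-freeness of duals
    have hDtf : ∀ (r : R) (d : D), r • d = 0 → r = 0 ∨ d = 0 := by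
      intro r d h
      by_cases hr : r = 0
      · exact Or.inl hr
      right
      refine LinearMap.ext fun y => ?_
      have h1 : r • d y = 0 := by
        have := LinearMap.congr_fun h y
        exact this
      rcases hAtf r (d y) h1 with h' | h'
      · exact absurd h' hr
      · simpa using h'
    have hN₀tf : ∀ (r : R) (m : N₀), r • m = 0 → r = 0 ∨ m = 0 := by
      intro r m hm
      by_cases hr : r = 0
      · exact Or.inl hr
      right
      obtain ⟨d, rfl⟩ := Submodule.Quotient.mk_surjective _ m
      rw [← Submodule.Quotient.mk_smul, Submodule.Quotient.mk_eq_zero] at hm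
      obtain ⟨f, hf⟩ := hm
      have hker : LinearMap.ker p ≤ LinearMap.ker d := by
        intro x hx
        have hx0 : p x = 0 := hx
        have h1 : r • d x = 0 := by
          have h2 := LinearMap.congr_fun hf x
          have h3 : (j f) x = f (p x) := rfl
          have h4 : (r • d) x = r • d x := rfl
          rw [h3, h4] at h2
          rw [← h2, hx0, map_zero]
        rcases hAtf r (d x) h1 with h' | h'
        · exact absurd h' hr
        · exact h'
      rw [Submodule.Quotient.mk_eq_zero]
      let epk := p.quotKerEquivOfSurjective hp
      refine ⟨((LinearMap.ker p).liftQ d hker) ∘ₗ (epk.symm : X →ₗ[𝔄] _), ?_⟩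
      refine LinearMap.ext fun x => ?_
      show ((LinearMap.ker p).liftQ d hker) (epk.symm (p x)) = d x
      have hmk : epk (Submodule.Quotient.mk x) = p x := rfl
      rw [← hmk, LinearEquiv.symm_apply_apply, Submodule.liftQ_apply]
    have hfin : Module.Finite 𝔄 N₀ := inferInstance
    have hext := hGor N₀ hfin hN₀tf
    have hproj : Module.Projective 𝔄 D := inferInstance
    let ej := LinearEquiv.ofInjective j hj
    let eeq : (LinearMap.ker (LinearMap.range j).mkQ : Submodule 𝔄 D) ≃ₗ[𝔄]
        (LinearMap.range j : Submodule 𝔄 D) := LinearEquiv.ofEq _ _ (Submodule.ker_mkQ _)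
    let φ : LinearMap.ker (LinearMap.range j).mkQ →ₗ[𝔄] 𝔄 :=
      ξ ∘ₗ (ej.symm : (LinearMap.range j : Submodule 𝔄 D) →ₗ[𝔄] Module.Dual 𝔄 X) ∘ₗ
        (eeq : (LinearMap.ker (LinearMap.range j).mkQ : Submodule 𝔄 D) →ₗ[𝔄] _)
    obtain ⟨g, hg⟩ := lift_of_ext' hproj (LinearMap.range j).mkQ
      (Submodule.mkQ_surjective _) hext φ
    have key : ∀ f : Module.Dual 𝔄 X, g (j f) = ξ f := by
      intro f
      have hmem : j f ∈ LinearMap.ker (LinearMap.range j).mkQ := by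
        rw [Submodule.ker_mkQ]; exact ⟨f, rfl⟩
      rw [hg (j f) hmem]
      show ξ (ej.symm (eeq ⟨j f, hmem⟩)) = ξ f
      congr 1
      have h4 : eeq ⟨j f, hmem⟩ = ⟨j f, ⟨f, rfl⟩⟩ := rfl
      rw [h4]
      have h5 : ej f = ⟨j f, ⟨f, rfl⟩⟩ := Subtype.ext rfl
      rw [← h5, LinearEquiv.symm_apply_apply]
    obtain ⟨y, hy⟩ := (Module.bijective_dual_eval 𝔄 (Fin n → 𝔄)).2 g
    refine ⟨p y, LinearMap.ext fun f => ?_⟩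
    show f (p y) = ξ f
    rw [← key f, ← hy]
    rfl
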